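/- Let g : (ℝ₊)⁵ → ℝ₊ satisfy: for all Q, P, V, w, T > 0 and all S, U, τ, A > 0, g(S·Q, S⁻¹·U·A⁻¹·P, S·τ⁻¹·V, τ⁻¹·A²·w, τ·T) = A · g(Q, P, V, w, T). Then there exists a function h : ℝ₊ → ℝ₊ such that for all Q, P, V, w, T > 0, g(Q, P, V, w, T) = √w · √(Q/V) · h(Q/(V·T)). -/

import Mathlib

/-- Market impact with execution horizon `T`: under unit invariance and leverage
neutrality, `g Q P V w T = √w * √(Q/V) * h (Q/(V*T))`, where `h` characterizes the
deviation from the square-root law in dependence of the participation rate. -/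
theorem market_impact_sqrt_deviation_time (g : ℝ → ℝ → ℝ → ℝ → ℝ → ℝ)
    (hg_pos : ∀ Q P V w T : ℝ, 0 < Q → 0 < P → 0 < V → 0 < w → 0 < T →
      0 < g Q P V w T)
    (hg_inv : ∀ Q P V w T S U τ A : ℝ, 0 < Q → 0 < P → 0 < V → 0 < w → 0 < T →
      0 < S → 0 < U → 0 < τ → 0 < A →
      g (S * Q) (S⁻¹ * U * A⁻¹ * P) (S * τ⁻¹ * V) (τ⁻¹ * A ^ 2 * w) (τ * T)
        = A * g Q P V w T) :
    ∃ h : ℝ → ℝ, (∀ z : ℝ, 0 < z → 0 < h z) ∧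
      ∀ Q P V w T : ℝ, 0 < Q → 0 < P → 0 < V → 0 < w → 0 < T →
        g Q P V w T
          = Real.sqrt w * Real.sqrt (Q / V) * h (Q / (V * T)) := by
  refine ⟨fun z => g z 1 1 1 1 / Real.sqrt z, ?_, ?_⟩
  · intro z hz
    exact div_pos (hg_pos _ _ _ _ _ hz one_pos one_pos one_pos one_pos)
      (Real.sqrt_pos.2 hz)
  · intro Q P V w T hQ hP hV hw hT
    have hTw : 0 < T * w := mul_pos hT hw
    have hsTw : 0 < Real.sqrt (T * w) := Real.sqrt_pos.2 hTw
    have hVT : 0 < V * T := mul_pos hV hT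
    have key := hg_inv Q P V w T ((V * T)⁻¹)
      ((V * T)⁻¹ * (Real.sqrt (T * w))⁻¹ * P⁻¹) (T⁻¹) ((Real.sqrt (T * w))⁻¹)
      hQ hP hV hw hT (inv_pos.2 hVT) (by positivity) (inv_pos.2 hT)
      (inv_pos.2 hsTw)
    have a1 : (V * T)⁻¹ * Q = Q / (V * T) := by ring
    have a2 : ((V * T)⁻¹)⁻¹ * ((V * T)⁻¹ * (Real.sqrt (T * w))⁻¹ * P⁻¹)
        * ((Real.sqrt (T * w))⁻¹)⁻¹ * P = 1 := by
      field_simp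
    have a3 : (V * T)⁻¹ * (T⁻¹)⁻¹ * V = 1 := by
      field_simp
    have a4 : (T⁻¹)⁻¹ * ((Real.sqrt (T * w))⁻¹) ^ 2 * w = 1 := by
      rw [inv_pow, Real.sq_sqrt hTw.le]
      field_simp
    have a5 : T⁻¹ * T = 1 := inv_mul_cancel₀ hT.ne'
    rw [a1, a2, a3, a4, a5] at key
    have key2 : g Q P V w T = Real.sqrt (T * w) * g (Q / (V * T)) 1 1 1 1 := by
      rw [key]
      field_simp
    rw [key2]
    have hz : 0 < Q / (V * T) := div_pos hQ hVT
    have hsz : Real.sqrt (Q / (V * T)) ≠ 0 := (Real.sqrt_pos.2 hz).ne'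
    have hQV : Q / V = (Q / (V * T)) * T := by field_simp
    rw [hQV, Real.sqrt_mul hz.le, Real.sqrt_mul hT.le]
    field_simp
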